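/- If λ = (λ_1,…,λ_n) ∈ ℂ^n satisfies |λ_j| ≥ 1 for some 1 ≤ j ≤ n, then there exist no bounded operators B_1,…,B_n on H_n with B_i (L_j − λ_j I) = δ_{ij} I for all 1 ≤ i, j ≤ n. Equivalently, the joint left spectrum of the left creation operators L = (L_1,…,L_n) contains the complement in ℂ^n of the open unit polydisc { λ ∈ ℂ^n : |λ_i| < 1 for all i }. -/

import Mathlib

noncomputable section

open scoped InnerProductSpace ComplexConjugate

instance {n : ℕ} : DecidableEq (FreeMonoid (Fin n)) := Classical.decEq _

/-- `n`-variable Fock space `H_n = ℓ²(F_n^+)`. -/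
abbrev Hn (n : ℕ) : Type := lp (fun _ : FreeMonoid (Fin n) => ℂ) 2

/-- The standard orthonormal basis vector `ξ_w` of `H_n`. -/
def xi {n : ℕ} (w : FreeMonoid (Fin n)) : Hn n := lp.single 2 w 1

lemma xi_norm {n : ℕ} (w : FreeMonoid (Fin n)) : ‖xi w‖ = 1 := by
  have := lp.norm_single (p := 2) (by norm_num)
    (E := fun _ : FreeMonoid (Fin n) => ℂ) w (1:ℂ)
  simpa [xi] using this

lemma freeMonoid_length_pow {n : ℕ} (j : Fin n) (m : ℕ) :
    (FreeMonoid.of j ^ m).length = m := by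
  induction m with
  | zero => simp
  | succ m ih => rw [pow_succ, FreeMonoid.length_mul, ih, FreeMonoid.length_of]

lemma key_no_left_inverse (n : ℕ) (hn : 2 ≤ n)
    (L : Fin n → (Hn n →L[ℂ] Hn n))
    (hL : ∀ i w, L i (xi w) = xi (FreeMonoid.of i * w))
    (l : Fin n → ℂ) (j : Fin n) (hj : 1 ≤ ‖l j‖) :
    ¬ ∃ B : Fin n → (Hn n →L[ℂ] Hn n),
      ∀ i j, B i * (L j - l j • (1 : Hn n →L[ℂ] Hn n)) =
        if i = j then 1 else 0 := by
  rintro ⟨B, hB⟩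
  have hnt : Nontrivial (Fin n) := Fin.nontrivial_iff_two_le.mpr hn
  obtain ⟨i, hij⟩ := exists_ne j
  -- Step A: B i ξ_{jw} = λ_j • B i ξ_w
  have hA : ∀ w, B i (xi (FreeMonoid.of j * w)) = l j • B i (xi w) := by
    intro w
    have h0 := hB i j
    rw [if_neg hij] at h0
    have h1 := congrArg (fun T : Hn n →L[ℂ] Hn n => T (xi w)) h0
    simp only [ContinuousLinearMap.mul_apply, ContinuousLinearMap.sub_apply,
      ContinuousLinearMap.smul_apply, ContinuousLinearMap.one_apply,
      ContinuousLinearMap.zero_apply, map_sub, map_smul, hL] at h1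
    exact sub_eq_zero.mp h1
  -- Step B: B i ξ_{j^m w} = λ_j^m • B i ξ_w
  have hpow : ∀ (m : ℕ) (w : FreeMonoid (Fin n)),
      B i (xi (FreeMonoid.of j ^ m * w)) = (l j) ^ m • B i (xi w) := by
    intro m
    induction m with
    | zero => intro w; simp
    | succ m ih =>
      intro w
      have hmul : FreeMonoid.of j ^ (m + 1) * w
          = FreeMonoid.of j ^ m * (FreeMonoid.of j * w) := by
        rw [pow_succ, mul_assoc]
      rw [hmul, ih, hA, smul_smul, ← pow_succ]
  -- Step C: B i ξ_w = 0 for all w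
  have hker : ∀ w, B i (xi w) = 0 := by
    intro w
    have hinner : ∀ v : Hn n, ⟪v, B i (xi w)⟫_ℂ = 0 := by
      intro v
      set z : Hn n := ContinuousLinearMap.adjoint (B i) v with hz
      set u : ℕ → FreeMonoid (Fin n) := fun m => FreeMonoid.of j ^ m * w with hu
      have hu_inj : Function.Injective u := by
        intro a b hab
        have hlen := congrArg FreeMonoid.length hab
        simpa [hu, FreeMonoid.length_mul, freeMonoid_length_pow] using hlen
      have hbound : ∀ m, ‖⟪v, B i (xi w)⟫_ℂ‖ ≤ ‖z (u m)‖ := by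
        intro m
        have h1 : ⟪v, B i (xi (u m))⟫_ℂ = (l j) ^ m * ⟪v, B i (xi w)⟫_ℂ := by
          have : xi (u m) = xi (FreeMonoid.of j ^ m * w) := rfl
          rw [this, hpow m w, inner_smul_right]
        have h2 : ⟪v, B i (xi (u m))⟫_ℂ = conj (z (u m)) := by
          rw [← ContinuousLinearMap.adjoint_inner_left, ← hz, xi,
            lp.inner_single_right]
          simp [RCLike.inner_apply]
        have h3 : ‖l j‖ ^ m * ‖⟪v, B i (xi w)⟫_ℂ‖ = ‖z (u m)‖ := by
          have := congrArg norm (h1.symm.trans h2)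
          simpa [norm_mul, norm_pow] using this
        have h4 : (1 : ℝ) ≤ ‖l j‖ ^ m := one_le_pow₀ hj
        nlinarith [norm_nonneg (⟪v, B i (xi w)⟫_ℂ), norm_nonneg (z (u m))]
      have hsum : Summable fun k => ‖z k‖ ^ (2 : ENNReal).toReal :=
        (memℓp_gen_iff (by norm_num)).mp (lp.memℓp z)
      have hc1 : Filter.Tendsto (fun k => ‖z k‖ ^ (2 : ENNReal).toReal)
          Filter.cofinite (nhds 0) := hsum.tendsto_cofinite_zero
      have hc2 : Filter.Tendsto u Filter.atTop Filter.cofinite :=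
        Nat.cofinite_eq_atTop ▸ hu_inj.tendsto_cofinite
      have hc3 : Filter.Tendsto (fun m => ‖z (u m)‖ ^ (2 : ℝ))
          Filter.atTop (nhds 0) := by
        have := hc1.comp hc2
        simpa [Function.comp_def] using this
      have hc4 : Filter.Tendsto (fun m => ‖z (u m)‖) Filter.atTop (nhds 0) := by
        have hsq := (Real.continuous_sqrt.tendsto 0).comp hc3
        have heq : (fun m => Real.sqrt (‖z (u m)‖ ^ (2:ℝ)))
            = fun m => ‖z (u m)‖ := by
          funext m
          rw [show ((2:ℝ)) = ((2:ℕ) : ℝ) by norm_num, Real.rpow_natCast,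
            Real.sqrt_sq (norm_nonneg _)]
        rw [show Real.sqrt 0 = 0 from Real.sqrt_zero] at hsq
        have : (fun x => Real.sqrt x) ∘ (fun m => ‖z (u m)‖ ^ (2:ℝ))
            = fun m => ‖z (u m)‖ := by
          funext m; exact congrFun heq m
        rwa [this] at hsq
      have hle : ‖⟪v, B i (xi w)⟫_ℂ‖ ≤ 0 := ge_of_tendsto' hc4 hbound
      exact norm_le_zero_iff.mp hle
    have := hinner (B i (xi w))
    exact inner_self_eq_zero.mp this
  -- Final contradiction
  have h1 := hB i i
  rw [if_pos rfl] at h1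
  have h2 := congrArg (fun T : Hn n →L[ℂ] Hn n => T (xi 1)) h1
  simp only [ContinuousLinearMap.mul_apply, ContinuousLinearMap.sub_apply,
    ContinuousLinearMap.smul_apply, ContinuousLinearMap.one_apply,
    map_sub, map_smul, hL, hker, smul_zero, sub_zero] at h2
  have hx := xi_norm (n := n) 1
  rw [← h2] at hx
  simp at hx

/-- If `|λ_j| ≥ 1` for some `j`, then there are no bounded operators
`B_1, …, B_n` with `B_i (L_j − λ_j I) = δ_{ij} I` for all `i, j`; equivalently, the
joint left spectrum of the left creation operators contains the complement of the
open unit polydisc. -/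
theorem left_spectrum_of_creation_operators (n : ℕ) (hn : 2 ≤ n)
    (L : Fin n → (Hn n →L[ℂ] Hn n))
    (hL : ∀ i w, L i (xi w) = xi (FreeMonoid.of i * w)) :
    (∀ l : Fin n → ℂ, (∃ j, 1 ≤ ‖l j‖) →
        ¬ ∃ B : Fin n → (Hn n →L[ℂ] Hn n),
          ∀ i j, B i * (L j - l j • (1 : Hn n →L[ℂ] Hn n)) =
            if i = j then 1 else 0) ∧
      {l : Fin n → ℂ | ∀ i, ‖l i‖ < 1}ᶜ ⊆
        {l : Fin n → ℂ | ¬ ∃ B : Fin n → (Hn n →L[ℂ] Hn n),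
          ∀ i j, B i * (L j - l j • (1 : Hn n →L[ℂ] Hn n)) =
            if i = j then 1 else 0} := by
  constructor
  · rintro l ⟨j, hj⟩
    exact key_no_left_inverse n hn L hL l j hj
  · intro l hl
    simp only [Set.mem_compl_iff, Set.mem_setOf_eq, not_forall, not_lt] at hl
    obtain ⟨j, hj⟩ := hl
    exact key_no_left_inverse n hn L hL l j hj
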